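/- Let R be an ordered vector space over an ordered division ring D. Every linear cell in R^n is convex (closed under rational convex combinations): for all x, y in the cell and q ∈ ℚ ∩ [0,1], qx + (1−q)y lies in the cell. -/

import Mathlib

/-- An affine (linear) function `R^n → R` with coefficients in the division ring `D`:
`f(x) = λ₁ x₁ + ⋯ + λₙ xₙ + a`. -/
def IsAffine (D : Type*) {R : Type*} [DivisionRing D] [AddCommGroup R] [Module D R]
    {n : ℕ} (f : (Fin n → R) → R) : Prop :=
  ∃ (l : Fin n → D) (a : R), ∀ x, f x = (∑ i, l i • x i) + a

/-- Linear cells in `R^n`, defined inductively: singletons and open intervals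
(possibly unbounded) in `R`; graphs of affine functions and open cylinders between
affine functions (or `±∞`) over linear cells. -/
inductive IsLinearCell (D R : Type*) [DivisionRing D] [LinearOrder R]
    [AddCommGroup R] [Module D R] : ∀ n : ℕ, Set (Fin n → R) → Prop
  | singleton (a : R) : IsLinearCell D R 1 {x | x 0 = a}
  | ioo (a b : R) : IsLinearCell D R 1 {x | a < x 0 ∧ x 0 < b}
  | ioi (a : R) : IsLinearCell D R 1 {x | a < x 0}
  | iio (b : R) : IsLinearCell D R 1 {x | x 0 < b}
  | univ1 : IsLinearCell D R 1 Set.univ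
  | graph {n : ℕ} {X : Set (Fin n → R)} {f : (Fin n → R) → R} :
      IsLinearCell D R n X → IsAffine D f →
      IsLinearCell D R (n + 1)
        {x | Fin.init x ∈ X ∧ x (Fin.last n) = f (Fin.init x)}
  | cyl {n : ℕ} {X : Set (Fin n → R)} {f g : (Fin n → R) → R} :
      IsLinearCell D R n X → IsAffine D f → IsAffine D g → (∀ x ∈ X, f x < g x) →
      IsLinearCell D R (n + 1)
        {x | Fin.init x ∈ X ∧ f (Fin.init x) < x (Fin.last n) ∧
          x (Fin.last n) < g (Fin.init x)}
  | cylTop {n : ℕ} {X : Set (Fin n → R)} {f : (Fin n → R) → R} :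
      IsLinearCell D R n X → IsAffine D f →
      IsLinearCell D R (n + 1) {x | Fin.init x ∈ X ∧ f (Fin.init x) < x (Fin.last n)}
  | cylBot {n : ℕ} {X : Set (Fin n → R)} {g : (Fin n → R) → R} :
      IsLinearCell D R n X → IsAffine D g →
      IsLinearCell D R (n + 1) {x | Fin.init x ∈ X ∧ x (Fin.last n) < g (Fin.init x)}
  | cylAll {n : ℕ} {X : Set (Fin n → R)} :
      IsLinearCell D R n X → IsLinearCell D R (n + 1) {x | Fin.init x ∈ X}


section Helpers

variable {R : Type*} [AddCommGroup R] [LinearOrder R] [IsOrderedAddMonoid R] [Module ℚ R]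

lemma qsmul_pos {q : ℚ} {r : R} (hq : 0 < q) (hr : 0 < r) : 0 < q • r := by
  by_contra h
  push_neg at h
  have hden : ((q.den : ℚ)) • (q • r) = (q.num : ℚ) • r := by
    rw [smul_smul]
    congr 1
    rw [mul_comm]
    exact_mod_cast Rat.mul_den_eq_num q
  have h1 : (q.den : ℚ) • (q • r) = q.den • (q • r) := by
    exact_mod_cast Nat.cast_smul_eq_nsmul ℚ q.den (q • r)
  have h2 : (q.num : ℚ) • r = q.num • r := Int.cast_smul_eq_zsmul ℚ q.num r
  have hnum : (0:ℤ) < q.num := Rat.num_pos.2 hq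
  have hpos2 : 0 < q.num • r := zsmul_pos hr hnum
  have hnp : q.den • (q • r) ≤ 0 := nsmul_nonpos h q.den
  rw [← h1, hden, h2] at hnp
  exact absurd hpos2 (not_lt.2 hnp)

lemma qsmul_nonneg {q : ℚ} {r : R} (hq : 0 ≤ q) (hr : 0 ≤ r) : 0 ≤ q • r := by
  rcases hq.lt_or_eq with h | h
  · rcases hr.lt_or_eq with h' | h'
    · exact (qsmul_pos h h').le
    · simp [← h']
  · simp [← h]

lemma qsmul_le_qsmul {q : ℚ} {a b : R} (hq : 0 ≤ q) (hab : a ≤ b) : q • a ≤ q • b :=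
  sub_nonneg.1 (by rw [← smul_sub]; exact qsmul_nonneg hq (sub_nonneg.2 hab))

lemma qsmul_lt_qsmul {q : ℚ} {a b : R} (hq : 0 < q) (hab : a < b) : q • a < q • b :=
  sub_pos.1 (by rw [← smul_sub]; exact qsmul_pos hq (sub_pos.2 hab))

lemma comb_self (q : ℚ) (a : R) : q • a + (1 - q) • a = a := by
  rw [← add_smul]; simp

lemma comb_lt {q : ℚ} {a b c d : R} (h1 : a < c) (h2 : b < d) (hq0 : 0 ≤ q) (hq1 : q ≤ 1) :
    q • a + (1 - q) • b < q • c + (1 - q) • d := by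
  rcases hq1.lt_or_eq with h | h
  · exact add_lt_add_of_le_of_lt (qsmul_le_qsmul hq0 h1.le)
      (qsmul_lt_qsmul (by linarith) h2)
  · subst h
    simpa using h1

variable {D : Type*} [DivisionRing D] [Module D R] [SMulCommClass ℚ D R]

lemma affine_comb {n : ℕ} {f : (Fin n → R) → R} (hf : IsAffine D f)
    (u v : Fin n → R) (q : ℚ) :
    f (q • u + (1 - q) • v) = q • f u + (1 - q) • f v := by
  obtain ⟨l, a, hl⟩ := hf
  rw [hl, hl, hl]
  conv_lhs => rw [← comb_self q a]
  simp only [Pi.add_apply, Pi.smul_apply, smul_add, smul_comm (_ : ℚ) (_ : D),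
    Finset.sum_add_distrib, Finset.smul_sum]
  abel

lemma init_comb {R : Type*} [AddCommGroup R] [Module ℚ R] {n : ℕ}
    (x y : Fin (n+1) → R) (q : ℚ) :
    Fin.init (q • x + (1 - q) • y) = q • Fin.init x + (1 - q) • Fin.init y := rfl

end Helpers

/-- every linear cell in `R^n` is convex, i.e. closed under rational
convex combinations. -/
theorem stmt_6 {D R : Type*} [DivisionRing D] [LinearOrder D]
    [AddCommGroup R] [LinearOrder R] [IsOrderedAddMonoid R] [Module D R] [Module ℚ R] [SMulCommClass ℚ D R]
    (hpos : ∀ (d : D) (r : R), 0 < d → 0 < r → 0 < d • r) :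
    ∀ (n : ℕ) (C : Set (Fin n → R)), IsLinearCell D R n C →
      ∀ x ∈ C, ∀ y ∈ C, ∀ q : ℚ, 0 ≤ q → q ≤ 1 → q • x + (1 - q) • y ∈ C := by
  intro n C hC
  induction hC with
  | singleton a =>
    intro x hx y hy q hq0 hq1
    simp only [Set.mem_setOf_eq] at hx hy ⊢
    simp only [Pi.add_apply, Pi.smul_apply, hx, hy]
    exact comb_self q a
  | ioo a b =>
    intro x hx y hy q hq0 hq1
    obtain ⟨hx1, hx2⟩ := hx
    obtain ⟨hy1, hy2⟩ := hy
    constructor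
    · have h := comb_lt hx1 hy1 hq0 hq1
      rw [comb_self] at h
      simpa [Pi.add_apply] using h
    · have h := comb_lt hx2 hy2 hq0 hq1
      rw [comb_self] at h
      simpa [Pi.add_apply] using h
  | ioi a =>
    intro x hx y hy q hq0 hq1
    have h := comb_lt hx hy hq0 hq1
    rw [comb_self] at h
    simpa [Pi.add_apply] using h
  | iio b =>
    intro x hx y hy q hq0 hq1
    have h := comb_lt hx hy hq0 hq1
    rw [comb_self] at h
    simpa [Pi.add_apply] using h
  | univ1 => intro x _ y _ q _ _; trivial
  | @graph m X f hX hf ih =>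
    intro x hx y hy q hq0 hq1
    refine ⟨?_, ?_⟩
    · show Fin.init (q • x + (1 - q) • y) ∈ X
      rw [init_comb]
      exact ih _ hx.1 _ hy.1 q hq0 hq1
    · show (q • x + (1 - q) • y) (Fin.last _) = _
      rw [init_comb, affine_comb hf]
      simp only [Pi.add_apply, Pi.smul_apply, hx.2, hy.2]
  | @cyl m X f g hX hf hg hfg ih =>
    intro x hx y hy q hq0 hq1
    obtain ⟨hx0, hx1, hx2⟩ := hx
    obtain ⟨hy0, hy1, hy2⟩ := hy
    refine ⟨?_, ?_, ?_⟩
    · show Fin.init (q • x + (1 - q) • y) ∈ X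
      rw [init_comb]; exact ih _ hx0 _ hy0 q hq0 hq1
    · show f (Fin.init (q • x + (1 - q) • y)) < (q • x + (1 - q) • y) (Fin.last _)
      rw [init_comb, affine_comb hf]
      exact comb_lt hx1 hy1 hq0 hq1
    · show (q • x + (1 - q) • y) (Fin.last _) < g (Fin.init (q • x + (1 - q) • y))
      rw [init_comb, affine_comb hg]
      exact comb_lt hx2 hy2 hq0 hq1
  | @cylTop m X f hX hf ih =>
    intro x hx y hy q hq0 hq1
    refine ⟨?_, ?_⟩
    · show Fin.init (q • x + (1 - q) • y) ∈ X
      rw [init_comb]; exact ih _ hx.1 _ hy.1 q hq0 hq1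
    · show f (Fin.init (q • x + (1 - q) • y)) < (q • x + (1 - q) • y) (Fin.last _)
      rw [init_comb, affine_comb hf]
      exact comb_lt hx.2 hy.2 hq0 hq1
  | @cylBot m X g hX hg ih =>
    intro x hx y hy q hq0 hq1
    refine ⟨?_, ?_⟩
    · show Fin.init (q • x + (1 - q) • y) ∈ X
      rw [init_comb]; exact ih _ hx.1 _ hy.1 q hq0 hq1
    · show (q • x + (1 - q) • y) (Fin.last _) < g (Fin.init (q • x + (1 - q) • y))
      rw [init_comb, affine_comb hg]
      exact comb_lt hx.2 hy.2 hq0 hq1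
  | @cylAll m X hX ih =>
    intro x hx y hy q hq0 hq1
    show Fin.init (q • x + (1 - q) • y) ∈ X
    rw [init_comb]
    exact ih _ hx _ hy q hq0 hq1
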